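/- Let σᵢ : [0,T] → (0,∞), i = 1,…,n, be continuous functions, each attaining its maximum on [0,T] at a unique common point t₀, with σᵢ(t) = σᵢ(t₀) − bᵢ|t − t₀|^{βᵢ}(1 + o(1)) as t → t₀ for bᵢ, βᵢ > 0. Let g(t) = Σᵢ σᵢ(t)^{−2}. Then g attains its minimum on [0,T] uniquely at t₀, and g(t) − g(t₀) = (Σ_{i: βᵢ = β} 2bᵢ/σᵢ³(t₀)) |t − t₀|^{β}(1 + o(1)) as t → t₀, where β = minᵢ βᵢ. -/

import Mathlib

open Filter

/-- If each `σᵢ` attains its maximum on `[0,T]` uniquely at the common point `t₀` with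
`σᵢ(t) = σᵢ(t₀) − bᵢ|t−t₀|^{βᵢ}(1+o(1))`, then `g(t) = Σᵢ σᵢ(t)⁻²` attains its minimum
uniquely at `t₀` and `g(t) − g(t₀) = (Σ_{i : βᵢ = β} 2bᵢ/σᵢ(t₀)³)|t−t₀|^β (1+o(1))`,
where `β = minᵢ βᵢ`. -/
theorem stmt_8
    (n : ℕ) (T : ℝ) (hT : 0 < T) (σ : Fin n → ℝ → ℝ) (t₀ : ℝ)
    (ht₀ : t₀ ∈ Set.Icc 0 T)
    (hσcont : ∀ i, ContinuousOn (σ i) (Set.Icc 0 T))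
    (hσpos : ∀ i t, t ∈ Set.Icc 0 T → 0 < σ i t)
    (hmax : ∀ i, ∀ t ∈ Set.Icc 0 T, t ≠ t₀ → σ i t < σ i t₀)
    (b βv : Fin n → ℝ) (hb : ∀ i, 0 < b i) (hβv : ∀ i, 0 < βv i)
    (hexp : ∀ i, Tendsto (fun t => (σ i t₀ - σ i t) / (b i * |t - t₀| ^ βv i))
      (nhdsWithin t₀ (Set.Icc 0 T \ {t₀})) (nhds 1))
    (β : ℝ) (hβle : ∀ i, β ≤ βv i) (hβex : ∃ i, βv i = β)
    (g : ℝ → ℝ) (hg : ∀ t, g t = ∑ i, ((σ i t) ^ 2)⁻¹) :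
    (∀ t ∈ Set.Icc 0 T, t ≠ t₀ → g t₀ < g t) ∧
    Tendsto (fun t => (g t - g t₀) /
        ((∑ i, if βv i = β then 2 * b i / (σ i t₀) ^ 3 else 0) * |t - t₀| ^ β))
      (nhdsWithin t₀ (Set.Icc 0 T \ {t₀})) (nhds 1) := by
  have hσ0 : ∀ i, 0 < σ i t₀ := fun i => hσpos i t₀ ht₀
  set F := nhdsWithin t₀ (Set.Icc 0 T \ {t₀}) with hF
  have hmem : ∀ᶠ t in F, t ∈ Set.Icc 0 T \ {t₀} := self_mem_nhdsWithin
  have hn : 0 < n := by obtain ⟨i, _⟩ := hβex; exact i.pos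
  constructor
  · intro t ht htne
    rw [hg, hg]
    apply Finset.sum_lt_sum_of_nonempty
    · exact Finset.univ_nonempty_iff.mpr (Fin.pos_iff_nonempty.mp hn)
    · intro i _
      have h1 := hσpos i t ht
      have h2 := hmax i t ht htne
      have h3 : (σ i t)^2 < (σ i t₀)^2 := by nlinarith
      exact inv_strictAnti₀ (by positivity) h3
  · have habs : Tendsto (fun t => |t - t₀|) F (nhds 0) := by
      have h1 : Tendsto (fun t : ℝ => |t - t₀|) (nhds t₀) (nhds |t₀ - t₀|) :=
        (continuous_abs.comp (continuous_id.sub continuous_const)).tendsto t₀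
      simpa using h1.mono_left nhdsWithin_le_nhds
    have hpow0 : ∀ c : ℝ, 0 < c → Tendsto (fun t => |t - t₀| ^ c) F (nhds 0) := by
      intro c hc
      have h1 := habs.rpow_const (p := c) (Or.inr hc.le)
      simpa [Real.zero_rpow hc.ne'] using h1
    have hposab : ∀ᶠ t in F, 0 < |t - t₀| := by
      filter_upwards [hmem] with t ht
      exact abs_pos.mpr (sub_ne_zero_of_ne ht.2)
    have hσtend : ∀ i, Tendsto (fun t => σ i t) F (nhds (σ i t₀)) := by
      intro i
      have hmul : Tendsto (fun t => ((σ i t₀ - σ i t) / (b i * |t - t₀| ^ βv i)) *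
          (b i * |t - t₀| ^ βv i)) F (nhds (1 * (b i * 0))) :=
        (hexp i).mul (tendsto_const_nhds.mul (hpow0 _ (hβv i)))
      have heq : ∀ᶠ t in F, ((σ i t₀ - σ i t) / (b i * |t - t₀| ^ βv i)) *
          (b i * |t - t₀| ^ βv i) = σ i t₀ - σ i t := by
        filter_upwards [hposab] with t ht
        have hne : b i * |t - t₀| ^ βv i ≠ 0 :=
          mul_ne_zero (hb i).ne' (Real.rpow_pos_of_pos ht _).ne'
        field_simp
        exact mul_div_cancel_right₀ _ (hb i).ne'
      have hd : Tendsto (fun t => σ i t₀ - σ i t) F (nhds 0) := by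
        simpa using hmul.congr' heq
      have h2 : Tendsto (fun t => σ i t₀ - (σ i t₀ - σ i t)) F (nhds (σ i t₀ - 0)) :=
        tendsto_const_nhds.sub hd
      simpa using h2
    have hr : ∀ i, Tendsto (fun t => (((σ i t) ^ 2)⁻¹ - ((σ i t₀) ^ 2)⁻¹) / |t - t₀| ^ βv i)
        F (nhds (2 * b i / σ i t₀ ^ 3)) := by
      intro i
      have h2 : Tendsto (fun t => b i * (σ i t₀ + σ i t) / ((σ i t) ^ 2 * (σ i t₀) ^ 2)) F
          (nhds (b i * (σ i t₀ + σ i t₀) / ((σ i t₀) ^ 2 * (σ i t₀) ^ 2))) := by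
        apply Tendsto.div
        · exact tendsto_const_nhds.mul (tendsto_const_nhds.add (hσtend i))
        · exact ((hσtend i).pow 2).mul tendsto_const_nhds
        · have := hσ0 i
          positivity
      have hmul := (hexp i).mul h2
      have heq : ∀ᶠ t in F, ((σ i t₀ - σ i t) / (b i * |t - t₀| ^ βv i)) *
          (b i * (σ i t₀ + σ i t) / ((σ i t) ^ 2 * (σ i t₀) ^ 2)) =
          (((σ i t) ^ 2)⁻¹ - ((σ i t₀) ^ 2)⁻¹) / |t - t₀| ^ βv i := by
        filter_upwards [hposab, hmem] with t hpt ht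
        have hσt : (σ i t) ≠ 0 := (hσpos i t ht.1).ne'
        have hb' : b i ≠ 0 := (hb i).ne'
        have hσ0' : σ i t₀ ≠ 0 := (hσ0 i).ne'
        have hp : |t - t₀| ^ βv i ≠ 0 := (Real.rpow_pos_of_pos hpt _).ne'
        field_simp
        ring
      have hc : b i * (σ i t₀ + σ i t₀) / ((σ i t₀) ^ 2 * (σ i t₀) ^ 2) =
          2 * b i / σ i t₀ ^ 3 := by
        have h := (hσ0 i).ne'
        field_simp
        ring
      have h3 := hmul.congr' heq
      rw [one_mul, hc] at h3
      exact h3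
    have hsum : Tendsto (fun t => ∑ i, (((σ i t) ^ 2)⁻¹ - ((σ i t₀) ^ 2)⁻¹) / |t - t₀| ^ βv i *
        |t - t₀| ^ (βv i - β)) F (nhds (∑ i, if βv i = β then 2 * b i / σ i t₀ ^ 3 else 0)) := by
      apply tendsto_finset_sum
      intro i _
      by_cases h : βv i = β
      · rw [if_pos h]
        simp only [show βv i - β = 0 by rw [h, sub_self], Real.rpow_zero, mul_one]
        exact hr i
      · rw [if_neg h]
        have hlt : 0 < βv i - β := sub_pos.mpr (lt_of_le_of_ne (hβle i) (Ne.symm h))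
        have := (hr i).mul (hpow0 _ hlt)
        simpa using this
    set C := ∑ i, if βv i = β then 2 * b i / σ i t₀ ^ 3 else 0 with hC
    have hCpos : 0 < C := by
      obtain ⟨j, hj⟩ := hβex
      apply Finset.sum_pos'
      · intro i _
        by_cases h : βv i = β
        · rw [if_pos h]; have := hσ0 i; have := hb i; positivity
        · rw [if_neg h]
      · refine ⟨j, Finset.mem_univ j, ?_⟩
        rw [if_pos hj]
        have := hσ0 j; have := hb j
        positivity
    have hdiv := hsum.div_const C
    have heqf : ∀ᶠ t in F, (∑ i, (((σ i t) ^ 2)⁻¹ - ((σ i t₀) ^ 2)⁻¹) / |t - t₀| ^ βv i *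
        |t - t₀| ^ (βv i - β)) / C = (g t - g t₀) / (C * |t - t₀| ^ β) := by
      filter_upwards [hposab] with t hpt
      have hpβ : (0:ℝ) < |t - t₀| ^ β := Real.rpow_pos_of_pos hpt _
      rw [hg, hg, ← Finset.sum_sub_distrib, Finset.sum_div, Finset.sum_div]
      apply Finset.sum_congr rfl
      intro i _
      have hpi : (0:ℝ) < |t - t₀| ^ βv i := Real.rpow_pos_of_pos hpt _
      rw [Real.rpow_sub hpt]
      have h1 : |t - t₀| ^ βv i ≠ 0 := hpi.ne'
      have h2 : |t - t₀| ^ β ≠ 0 := hpβ.ne'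
      have h3 : C ≠ 0 := hCpos.ne'
      field_simp
    have hfin := hdiv.congr' heqf
    rwa [div_self hCpos.ne'] at hfin
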